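/- Let l be a lace-map on the subsets of a finite set P. Then for every subset S of P there is a unique lace L such that L ⊆ S ⊆ L ∪ C(L), namely L = l(S); equivalently, the Boolean intervals {S : L ⊆ S ⊆ L ∪ C(L)}, as L ranges over all laces of l, partition the power set of P. -/

import Mathlib

/-- The set `C(L)` of properties compatible with a lace `L`. -/
def laceC {α : Type*} [DecidableEq α] [Fintype α]
    (l : Finset α → Finset α) (L : Finset α) : Finset α :=
  (Finset.univ \ L).filter (fun p => l (insert p L) = L)

/-- For every subset `S` there is a unique lace `L` with
`L ⊆ S ⊆ L ∪ C(L)`, namely `L = l S`; so the Boolean intervals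
`[L, L ∪ C(L)]`, as `L` ranges over laces, partition the power set. -/
theorem lace_interval_partition {α : Type*} [DecidableEq α] [Fintype α]
    (l : Finset α → Finset α)
    (h1 : ∀ S : Finset α, l S ⊆ S)
    (h2 : ∀ S G : Finset α, l S ⊆ G → G ⊆ S → l G = l S)
    (h3 : ∀ S₁ S₂ : Finset α, l S₁ = l S₂ → l (S₁ ∪ S₂) = l S₁)
    (S : Finset α) :
    (l (l S) = l S ∧ l S ⊆ S ∧ S ⊆ l S ∪ laceC l (l S)) ∧
      (∀ L : Finset α, l L = L → L ⊆ S → S ⊆ L ∪ laceC l L → L = l S) := by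
  have hls : l (l S) = l S := h2 S (l S) le_rfl (h1 S)
  constructor
  · refine ⟨hls, h1 S, ?_⟩
    intro p hp
    by_cases hpl : p ∈ l S
    · exact Finset.mem_union_left _ hpl
    · refine Finset.mem_union_right _ ?_
      simp only [laceC, Finset.mem_filter, Finset.mem_sdiff, Finset.mem_univ, true_and]
      refine ⟨hpl, ?_⟩
      exact h2 S (insert p (l S)) (Finset.subset_insert _ _)
        (Finset.insert_subset hp (h1 S))
  · intro L hL hLS hSC
    have key : ∀ T : Finset α, T ⊆ laceC l L → l (L ∪ T) = L := by
      intro T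
      induction T using Finset.induction_on with
      | empty => intro _; simpa using hL
      | @insert p T' hpT ih =>
        intro hsub
        have hT' : T' ⊆ laceC l L := fun x hx => hsub (Finset.mem_insert_of_mem hx)
        have hp' : p ∈ laceC l L := hsub (Finset.mem_insert_self _ _)
        have hpL : l (insert p L) = L := by
          simp only [laceC, Finset.mem_filter] at hp'
          exact hp'.2
        have he : l (L ∪ T') = l (L ∪ {p}) := by
          rw [ih hT']
          rw [show L ∪ {p} = insert p L by
            rw [Finset.union_comm]; rw [Finset.insert_eq]]
          rw [hpL]
        have := h3 (L ∪ T') (L ∪ {p}) he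
        have hset : (L ∪ T') ∪ (L ∪ {p}) = L ∪ insert p T' := by
          ext x; simp [Finset.mem_insert]; tauto
        rw [hset, ih hT'] at this
        exact this
    have hTsub : S \ L ⊆ laceC l L := by
      intro x hx
      rcases Finset.mem_sdiff.mp hx with ⟨hxS, hxL⟩
      rcases Finset.mem_union.mp (hSC hxS) with h | h
      · exact absurd h hxL
      · exact h
    have := key (S \ L) hTsub
    rw [Finset.union_sdiff_of_subset hLS] at this
    exact this.symm
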